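/- arXiv:1410.2530 — 2 statements merged into one kernel-verified Lean document; each statement's English description precedes it below -/
import Mathlib

section
/- Let ζ = exp(2πi/5). There is no integer k and no sign ε ∈ {1, −1} such that (ζ² − 1)⁴ = ε · ζᵏ · (ζ − 1)⁴ in ℂ. The same holds with ζ² replaced by ζ⁻². -/
open Complex

lemma pow4_inj {a b : ℝ} (ha : 0 ≤ a) (hb : 0 ≤ b) (h : a ^ 4 = b ^ 4) : a = b := by
  rcases lt_trichotomy a b with hlt | he | hgt
  · exact absurd h (pow_lt_pow_left₀ hlt ha (by norm_num)).ne
  · exact he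
  · exact absurd h.symm (pow_lt_pow_left₀ hgt hb (by norm_num)).ne

/-- Let ζ = exp(2πi/5). There is no integer k and sign ε ∈ {1,−1} with
(ζ² − 1)⁴ = ε·ζᵏ·(ζ − 1)⁴; the same holds with ζ² replaced by ζ⁻². -/
theorem stmt_1 (ζ : ℂ) (hζ : ζ = Complex.exp (2 * Real.pi * Complex.I / 5)) :
    (¬ ∃ (k : ℤ) (ε : ℂ), (ε = 1 ∨ ε = -1) ∧
        (ζ ^ 2 - 1) ^ 4 = ε * ζ ^ k * (ζ - 1) ^ 4) ∧
    (¬ ∃ (k : ℤ) (ε : ℂ), (ε = 1 ∨ ε = -1) ∧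
        (ζ ^ (-2 : ℤ) - 1) ^ 4 = ε * ζ ^ k * (ζ - 1) ^ 4) := by
  have hπ := Real.pi_pos
  have hζdef : ζ = Complex.exp ((2 * Real.pi / 5 : ℝ) * Complex.I) := by
    rw [hζ]; push_cast; ring_nf
  have habs : ‖ζ‖ = 1 := by
    rw [hζdef, Complex.norm_exp_ofReal_mul_I]
  have hζ2 : ζ ^ 2 = Complex.exp ((4 * Real.pi / 5 : ℝ) * Complex.I) := by
    rw [hζdef, ← Complex.exp_nat_mul]
    norm_num
    ring_nf
  have h1 : ‖ζ - 1‖ ^ 2 = 2 - 2 * Real.cos (2 * Real.pi / 5) := by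
    rw [Complex.sq_norm, Complex.normSq_apply, hζdef]
    simp only [Complex.sub_re, Complex.sub_im, Complex.one_re, Complex.one_im,
      Complex.exp_ofReal_mul_I_re, Complex.exp_ofReal_mul_I_im]
    nlinarith [Real.sin_sq_add_cos_sq (2 * Real.pi / 5)]
  have h3 : ‖ζ ^ 2 - 1‖ ^ 2 = 2 - 2 * Real.cos (4 * Real.pi / 5) := by
    rw [hζ2, Complex.sq_norm, Complex.normSq_apply]
    simp only [Complex.sub_re, Complex.sub_im, Complex.one_re, Complex.one_im,
      Complex.exp_ofReal_mul_I_re, Complex.exp_ofReal_mul_I_im]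
    nlinarith [Real.sin_sq_add_cos_sq (4 * Real.pi / 5)]
  have hne : ‖ζ ^ 2 - 1‖ ≠ ‖ζ - 1‖ := by
    intro h
    have hc : Real.cos (4 * Real.pi / 5) = Real.cos (2 * Real.pi / 5) := by
      have h1' := h1; rw [← h, h3] at h1'; linarith
    have : (4 * Real.pi / 5) = (2 * Real.pi / 5) :=
      Real.injOn_cos ⟨by positivity, by linarith⟩ ⟨by positivity, by linarith⟩ hc
    linarith
  have key : ∀ (k : ℤ) (ε : ℂ), (ε = 1 ∨ ε = -1) →
      ‖(ε * ζ ^ k * (ζ - 1) ^ 4)‖ = ‖ζ - 1‖ ^ 4 := by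
    intro k ε hε
    have hεa : ‖ε‖ = 1 := by rcases hε with h | h <;> simp [h]
    rw [norm_mul, norm_mul, norm_pow, norm_zpow, habs, one_zpow, hεa, one_mul, one_mul]
  constructor
  · rintro ⟨k, ε, hε, heq⟩
    apply hne
    have h6 := congrArg norm heq
    rw [key k ε hε, norm_pow] at h6
    exact pow4_inj (norm_nonneg _) (norm_nonneg _) h6
  · rintro ⟨k, ε, hε, heq⟩
    apply hne
    have hinv : starRingEnd ℂ ζ = ζ⁻¹ := by
      have hm : starRingEnd ℂ ζ * ζ = 1 := by
        rw [mul_comm, Complex.mul_conj, Complex.normSq_eq_norm_sq, habs]; norm_num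
      exact eq_inv_of_mul_eq_one_left hm
    have hzp : ζ ^ (-2 : ℤ) = (ζ ^ 2)⁻¹ := by
      rw [zpow_neg]; norm_cast
    have hconj : ζ ^ (-2 : ℤ) - 1 = starRingEnd ℂ (ζ ^ 2 - 1) := by
      rw [map_sub, map_one, map_pow, hinv, hzp, inv_pow]
    have h6 := congrArg norm heq
    rw [key k ε hε, norm_pow, hconj, Complex.norm_conj] at h6
    exact pow4_inj (norm_nonneg _) (norm_nonneg _) h6
end

section
/- Let u : ℤ/5 → 𝕌 be the character sending the generator t to ζ = exp(2πi/5), extended to a ring homomorphism χ : ℤ[t]/(t⁵−1) → ℂ with χ(t) = ζ. Then χ((t−1)²·(t−1)²) = (ζ−1)⁴, and for the automorphism σ of ℤ[t]/(t⁵−1) determined by t ↦ t², χ(σ((t−1)⁴)) = (ζ²−1)⁴ ≠ ±ζᵏ (ζ−1)⁴ for all k ∈ ℤ. -/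
open Polynomial

/-- The group ring ℤ[t]/(t⁵ − 1) of ℤ/5, modeled as a quotient of ℤ[X]. -/
abbrev GroupRingZ5 : Type :=
  Polynomial ℤ ⧸ Ideal.span ({(X : Polynomial ℤ) ^ 5 - 1} : Set (Polynomial ℤ))

/-- The class of t in ℤ[t]/(t⁵ − 1). -/
noncomputable abbrev tZ5 : GroupRingZ5 :=
  Ideal.Quotient.mk _ (X : Polynomial ℤ)

lemma aux_abs_sub_one (θ : ℝ) :
    (‖Complex.exp (θ * Complex.I) - 1‖) ^ 2 = 2 - 2 * Real.cos θ := by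
  rw [Complex.sq_norm, Complex.normSq_apply]
  simp [Complex.sub_re, Complex.sub_im, Complex.exp_ofReal_mul_I_re,
    Complex.exp_ofReal_mul_I_im]
  have := Real.sin_sq_add_cos_sq θ
  nlinarith

/-- For the ring homomorphism χ : ℤ[t]/(t⁵−1) → ℂ with χ(t) = ζ = exp(2πi/5) and the
automorphism σ with σ(t) = t², we have χ((t−1)²·(t−1)²) = (ζ−1)⁴,
χ(σ((t−1)⁴)) = (ζ²−1)⁴, and (ζ²−1)⁴ ≠ ±ζᵏ(ζ−1)⁴ for all k ∈ ℤ. -/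
theorem stmt_8 (ζ : ℂ) (hζ : ζ = Complex.exp (2 * Real.pi * Complex.I / 5))
    (χ : GroupRingZ5 →+* ℂ) (hχ : χ tZ5 = ζ)
    (σ : GroupRingZ5 →+* GroupRingZ5) (hσ : σ tZ5 = tZ5 ^ 2) :
    χ ((tZ5 - 1) ^ 2 * (tZ5 - 1) ^ 2) = (ζ - 1) ^ 4 ∧
    χ (σ ((tZ5 - 1) ^ 4)) = (ζ ^ 2 - 1) ^ 4 ∧
    ∀ k : ℤ, (ζ ^ 2 - 1) ^ 4 ≠ ζ ^ k * (ζ - 1) ^ 4 ∧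
      (ζ ^ 2 - 1) ^ 4 ≠ -(ζ ^ k * (ζ - 1) ^ 4) := by
  have hpi := Real.pi_pos
  have hζ1 : ζ = Complex.exp ((2 * Real.pi / 5 : ℝ) * Complex.I) := by
    rw [hζ]; push_cast; ring_nf
  have hζ2 : ζ ^ 2 = Complex.exp ((4 * Real.pi / 5 : ℝ) * Complex.I) := by
    rw [hζ1, ← Complex.exp_nat_mul]; push_cast; ring_nf
  have habsζ : ‖ζ‖ = 1 := by
    rw [hζ1, Complex.norm_exp_ofReal_mul_I]
  -- squares of absolute values
  have ha : (‖ζ - 1‖) ^ 2 = 2 - 2 * Real.cos (2 * Real.pi / 5) := by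
    rw [hζ1]; exact aux_abs_sub_one _
  have hb : (‖ζ ^ 2 - 1‖) ^ 2 = 2 - 2 * Real.cos (4 * Real.pi / 5) := by
    rw [hζ2]; exact aux_abs_sub_one _
  have hcos1 : 0 < Real.cos (2 * Real.pi / 5) := by
    apply Real.cos_pos_of_mem_Ioo
    constructor <;> [nlinarith; nlinarith]
  have hcos2 : Real.cos (4 * Real.pi / 5) < 0 := by
    apply Real.cos_neg_of_pi_div_two_lt_of_lt <;> nlinarith
  have hlt : (‖ζ - 1‖) ^ 2 < (‖ζ ^ 2 - 1‖) ^ 2 := by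
    rw [ha, hb]; nlinarith
  have hne4 : (‖ζ ^ 2 - 1‖) ^ 4 ≠ (‖ζ - 1‖) ^ 4 := by
    have h1 : (‖ζ - 1‖) ^ 4 < (‖ζ ^ 2 - 1‖) ^ 4 := by
      have := pow_lt_pow_left₀ hlt (by positivity : (0:ℝ) ≤ (‖ζ - 1‖) ^ 2)
        (by norm_num : 2 ≠ 0)
      calc (‖ζ - 1‖) ^ 4 = ((‖ζ - 1‖) ^ 2) ^ 2 := by ring
        _ < ((‖ζ ^ 2 - 1‖) ^ 2) ^ 2 := this
        _ = (‖ζ ^ 2 - 1‖) ^ 4 := by ring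
    exact ne_of_gt h1
  have key : ∀ k : ℤ, ‖ζ ^ k * (ζ - 1) ^ 4‖ = (‖ζ - 1‖) ^ 4 := by
    intro k
    rw [norm_mul, norm_zpow, habsζ, one_zpow, one_mul, norm_pow]
  refine ⟨?_, ?_, ?_⟩
  · simp only [map_mul, map_pow, map_sub, map_one, hχ]; ring
  · simp only [map_pow, map_sub, map_one, hσ, hχ]
  · intro k
    constructor
    · intro h
      apply hne4
      calc (‖ζ ^ 2 - 1‖) ^ 4 = ‖(ζ ^ 2 - 1) ^ 4‖ := (norm_pow _ _).symm
        _ = ‖ζ ^ k * (ζ - 1) ^ 4‖ := by rw [h]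
        _ = (‖ζ - 1‖) ^ 4 := key k
    · intro h
      apply hne4
      calc (‖ζ ^ 2 - 1‖) ^ 4 = ‖(ζ ^ 2 - 1) ^ 4‖ := (norm_pow _ _).symm
        _ = ‖-(ζ ^ k * (ζ - 1) ^ 4)‖ := by rw [h]
        _ = ‖ζ ^ k * (ζ - 1) ^ 4‖ := norm_neg _
        _ = (‖ζ - 1‖) ^ 4 := key k
end
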